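/- arXiv:1805.07682 — 2 statements merged into one kernel-verified Lean document; each statement's English description precedes it below -/
import Mathlib

section
/- For any y ∈ ℝⁿ, X ∈ ℝ^{n×p}, D ∈ ℝ^{m×p} and λ > 0: (i) every optimal subgradient γ̂ of the generalized lasso problem gives rise to the same value of Dᵀγ̂, i.e., if γ̂⁽¹⁾ and γ̂⁽²⁾ are both optimal subgradients then Dᵀγ̂⁽¹⁾ = Dᵀγ̂⁽²⁾; and (ii) if D has full row rank (rank(D) = m), then the optimal subgradient is itself unique. -/
open Matrix

/-- The generalized lasso criterion `f(β) = (1/2)‖y − Xβ‖₂² + λ‖Dβ‖₁`. -/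
noncomputable def glCrit (n p m : ℕ) (y : Fin n → ℝ) (X : Matrix (Fin n) (Fin p) ℝ)
    (D : Matrix (Fin m) (Fin p) ℝ) (lam : ℝ) (β : Fin p → ℝ) : ℝ :=
  (1 / 2) * ∑ i, (y i - X.mulVec β i) ^ 2 + lam * ∑ i, |D.mulVec β i|

/-- A solution of the generalized lasso problem: a global minimizer. -/
def IsGLSol (n p m : ℕ) (y : Fin n → ℝ) (X : Matrix (Fin n) (Fin p) ℝ)
    (D : Matrix (Fin m) (Fin p) ℝ) (lam : ℝ) (β : Fin p → ℝ) : Prop :=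
  ∀ β' : Fin p → ℝ, glCrit n p m y X D lam β ≤ glCrit n p m y X D lam β'


/-- `γ̂` is an optimal subgradient: together with some solution `β̂` it satisfies
the KKT conditions `Xᵀ(y − Xβ̂) = λ Dᵀ γ̂`, with `γ̂ᵢ = sign((Dβ̂)ᵢ)` when
`(Dβ̂)ᵢ ≠ 0` and `γ̂ᵢ ∈ [−1,1]` when `(Dβ̂)ᵢ = 0`. -/
noncomputable def IsOptSubgrad (n p m : ℕ) (y : Fin n → ℝ) (X : Matrix (Fin n) (Fin p) ℝ)
    (D : Matrix (Fin m) (Fin p) ℝ) (lam : ℝ) (γ : Fin m → ℝ) : Prop :=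
  ∃ β : Fin p → ℝ, IsGLSol n p m y X D lam β ∧
    X.transpose.mulVec (y - X.mulVec β) = lam • D.transpose.mulVec γ ∧
    ∀ i : Fin m,
      (D.mulVec β i ≠ 0 → γ i = Real.sign (D.mulVec β i)) ∧
      (D.mulVec β i = 0 → γ i ∈ Set.Icc (-1 : ℝ) 1)

/-- Any two solutions of the generalized lasso problem share the same fitted value `Xβ`. -/
private lemma gl_fitted_eq (n p m : ℕ) (y : Fin n → ℝ) (X : Matrix (Fin n) (Fin p) ℝ)
    (D : Matrix (Fin m) (Fin p) ℝ) (lam : ℝ) (hlam : 0 ≤ lam)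
    (β₁ β₂ : Fin p → ℝ) (h₁ : IsGLSol n p m y X D lam β₁)
    (h₂ : IsGLSol n p m y X D lam β₂) : X.mulVec β₁ = X.mulVec β₂ := by
  set a := X.mulVec β₁ with ha
  set b := X.mulVec β₂ with hb
  set mid : Fin p → ℝ := (1 / 2 : ℝ) • (β₁ + β₂) with hmid
  have hXm : X.mulVec mid = (1 / 2 : ℝ) • (a + b) := by
    rw [hmid, Matrix.mulVec_smul, Matrix.mulVec_add]
  have hDm : D.mulVec mid = (1 / 2 : ℝ) • (D.mulVec β₁ + D.mulVec β₂) := by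
    rw [hmid, Matrix.mulVec_smul, Matrix.mulVec_add]
  set S := ∑ i, (a i - b i) ^ 2 with hS
  have hSnn : 0 ≤ S := Finset.sum_nonneg fun i _ => sq_nonneg _
  -- the quadratic part at the midpoint
  have hsum1 : ∑ i, (y i - X.mulVec mid i) ^ 2
      = ∑ i, ((y i - a i) ^ 2 / 2 + (y i - b i) ^ 2 / 2 - (a i - b i) ^ 2 / 4) := by
    refine Finset.sum_congr rfl fun i _ => ?_
    rw [hXm]
    simp only [Pi.smul_apply, Pi.add_apply, smul_eq_mul]
    ring
  have hsum1' : ∑ i, (y i - X.mulVec mid i) ^ 2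
      = (∑ i, (y i - a i) ^ 2) / 2 + (∑ i, (y i - b i) ^ 2) / 2 - S / 4 := by
    rw [hsum1, hS]
    rw [Finset.sum_sub_distrib, Finset.sum_add_distrib, ← Finset.sum_div, ← Finset.sum_div,
      ← Finset.sum_div]
  -- the ℓ¹ part at the midpoint
  have hsum2 : ∑ i, |D.mulVec mid i|
      ≤ (∑ i, |D.mulVec β₁ i|) / 2 + (∑ i, |D.mulVec β₂ i|) / 2 := by
    rw [← add_div, ← Finset.sum_add_distrib, Finset.sum_div]
    refine Finset.sum_le_sum fun i _ => ?_
    rw [hDm]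
    simp only [Pi.smul_apply, Pi.add_apply, smul_eq_mul]
    calc |1 / 2 * (D.mulVec β₁ i + D.mulVec β₂ i)|
        = |D.mulVec β₁ i + D.mulVec β₂ i| / 2 := by
          rw [abs_mul, abs_of_nonneg (by norm_num : (0:ℝ) ≤ 1/2)]; ring
      _ ≤ (|D.mulVec β₁ i| + |D.mulVec β₂ i|) / 2 := by
          gcongr; exact abs_add_le _ _
  -- combine
  have key : glCrit n p m y X D lam mid
      ≤ glCrit n p m y X D lam β₁ / 2 + glCrit n p m y X D lam β₂ / 2 - S / 8 := by
    unfold glCrit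
    rw [hsum1']
    have := mul_le_mul_of_nonneg_left hsum2 hlam
    rw [← ha, ← hb]
    nlinarith [this]
  have hm1 := h₁ mid
  have h12 := h₁ β₂
  have h21 := h₂ β₁
  have hSzero : S = 0 := le_antisymm (by nlinarith) hSnn
  funext i
  have := (Finset.sum_eq_zero_iff_of_nonneg (fun i (_ : i ∈ Finset.univ) => sq_nonneg (a i - b i))).mp hSzero i (Finset.mem_univ i)
  have : a i - b i = 0 := by
    have := sq_eq_zero_iff.mp this
    exact this
  linarith [this]

theorem generalized_lasso_subgradient_DT_invariant_and_unique_full_row_rank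
    (n p m : ℕ) (y : Fin n → ℝ) (X : Matrix (Fin n) (Fin p) ℝ)
    (D : Matrix (Fin m) (Fin p) ℝ) (lam : ℝ) (hlam : 0 < lam) :
    (∀ γ₁ γ₂ : Fin m → ℝ, IsOptSubgrad n p m y X D lam γ₁ →
      IsOptSubgrad n p m y X D lam γ₂ →
      D.transpose.mulVec γ₁ = D.transpose.mulVec γ₂) ∧
    (D.rank = m →
      ∀ γ₁ γ₂ : Fin m → ℝ, IsOptSubgrad n p m y X D lam γ₁ →
        IsOptSubgrad n p m y X D lam γ₂ → γ₁ = γ₂) := by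
  have main : ∀ γ₁ γ₂ : Fin m → ℝ, IsOptSubgrad n p m y X D lam γ₁ →
      IsOptSubgrad n p m y X D lam γ₂ →
      D.transpose.mulVec γ₁ = D.transpose.mulVec γ₂ := by
    intro γ₁ γ₂ ⟨β₁, hs₁, hk₁, _⟩ ⟨β₂, hs₂, hk₂, _⟩
    have hfit := gl_fitted_eq n p m y X D lam hlam.le β₁ β₂ hs₁ hs₂
    have : lam • D.transpose.mulVec γ₁ = lam • D.transpose.mulVec γ₂ := by
      rw [← hk₁, ← hk₂, hfit]
    exact smul_right_injective _ hlam.ne' this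
  refine ⟨main, fun hrank γ₁ γ₂ h1 h2 => ?_⟩
  have hinj : Function.Injective (D.transpose.mulVec) := by
    rw [Matrix.mulVec_injective_iff]
    rw [linearIndependent_iff_card_eq_finrank_span]
    have h1 : Dᵀ.rank = m := by rw [Matrix.rank_transpose]; exact hrank
    have h2 : Dᵀ.rank = (Set.range Dᵀ.col).finrank ℝ := by
      rw [Matrix.rank, Set.finrank, Matrix.range_mulVecLin]
    rw [Fintype.card_fin, ← h2, h1]
  exact hinj (main γ₁ γ₂ h1 h2)
end

section
/- Fix X ∈ ℝ^{n×p}, D ∈ ℝ^{m×p} and λ > 0. There is a set N ⊆ ℝⁿ of n-dimensional Lebesgue measure zero such that for every y ∉ N the following holds: if null(X) ∩ null(D_{−B}) = {0} for every boundary set B associated with an optimal subgradient of the generalized lasso problem, then the subspace null(D_{−B}) is the same for all such boundary sets B, and the generalized lasso solution is unique. -/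
open Matrix

/-- The boundary set of a subgradient `γ`: coordinates achieving absolute value 1. -/
def boundarySet (m : ℕ) (γ : Fin m → ℝ) : Set (Fin m) := {i | |γ i| = 1}

/-- The null space of `D_{−B}`, i.e. `{β : (Dβ)ᵢ = 0 for all i ∉ B}`. -/
def nullDminus (m p : ℕ) (D : Matrix (Fin m) (Fin p) ℝ) (B : Set (Fin m)) :
    Set (Fin p → ℝ) :=
  {β | ∀ i ∉ B, D.mulVec β i = 0}


open MeasureTheory in

lemma hyperplane_vol_zero {n : ℕ} (a : Fin n → ℝ) (ha : a ≠ 0) (c : ℝ) :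
    volume {y : Fin n → ℝ | a ⬝ᵥ y = c} = 0 := by
  obtain ⟨i, hi⟩ : ∃ i, a i ≠ 0 := by
    by_contra h; push_neg at h; exact ha (funext h)
  set φ : (Fin n → ℝ) →ₗ[ℝ] ℝ :=
    { toFun := fun y => a ⬝ᵥ y
      map_add' := fun x y => dotProduct_add a x y
      map_smul' := fun c x => by simp [dotProduct_smul] } with hφ
  set y₀ : Fin n → ℝ := (c / a i) • (Pi.single i 1 : Fin n → ℝ) with hy₀
  have hsingle : φ (Pi.single i 1 : Fin n → ℝ) = a i := by
    simp [hφ, dotProduct, Pi.single_apply, Finset.sum_ite_eq]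
  have hφy₀ : φ y₀ = c := by
    rw [hy₀, _root_.map_smul, hsingle, smul_eq_mul]; field_simp
  have hset : {y : Fin n → ℝ | a ⬝ᵥ y = c} = (fun y => y + (-y₀)) ⁻¹' (LinearMap.ker φ) := by
    ext y
    simp only [Set.mem_setOf_eq, Set.mem_preimage, SetLike.mem_coe, LinearMap.mem_ker, map_add,
      map_neg, hφy₀]
    constructor
    · intro h; show φ y - c = 0; rw [sub_eq_zero]; exact h
    · intro h; have : φ y - c = 0 := h; rw [sub_eq_zero] at this; exact this
  rw [hset, measure_preimage_add_right]
  apply Measure.addHaar_submodule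
  intro htop
  have h1 : (Pi.single i 1 : Fin n → ℝ) ∈ LinearMap.ker φ := htop ▸ Submodule.mem_top
  rw [LinearMap.mem_ker, hsingle] at h1
  exact hi h1


lemma exists_sep_vec {n p : ℕ} (X : Matrix (Fin n) (Fin p) ℝ)
    (L L' : Submodule ℝ (Fin p → ℝ)) (hLL : L' ≤ L)
    (hinj : ∀ w ∈ L, X.mulVec w = 0 → w = 0) (hne : ¬ L ≤ L') :
    ∃ v ∈ L, X.mulVec v ≠ 0 ∧ ∀ w ∈ L', X.mulVec v ⬝ᵥ X.mulVec w = 0 := by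
  classical
  obtain ⟨v₀, hv₀L, hv₀L'⟩ : ∃ v₀, v₀ ∈ L ∧ v₀ ∉ L' := by
    simpa [SetLike.le_def, not_forall] using hne
  set e : (Fin n → ℝ) ≃ₗ[ℝ] EuclideanSpace ℝ (Fin n) :=
    (WithLp.linearEquiv 2 ℝ (Fin n → ℝ)).symm with he
  set W : Submodule ℝ (EuclideanSpace ℝ (Fin n)) :=
    L'.map (e.toLinearMap ∘ₗ X.mulVecLin) with hW
  set u₀ : EuclideanSpace ℝ (Fin n) := e (X.mulVec v₀) with hu₀
  have hproj : (W.orthogonalProjectionOnto u₀ : EuclideanSpace ℝ (Fin n)) ∈ W :=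
    (W.orthogonalProjectionOnto u₀).2
  obtain ⟨w', hw'L', hw'⟩ := Submodule.mem_map.1 hproj
  simp only [LinearMap.coe_comp, LinearEquiv.coe_coe, Function.comp_apply,
    Matrix.mulVecLin_apply] at hw'
  refine ⟨v₀ - w', L.sub_mem hv₀L (hLL hw'L'), ?_, ?_⟩
  · intro h0
    have h1 : v₀ - w' = 0 := hinj _ (L.sub_mem hv₀L (hLL hw'L')) h0
    exact hv₀L' (sub_eq_zero.mp h1 ▸ hw'L')
  · intro w hw
    have hu : e (X.mulVec (v₀ - w')) ∈ Wᗮ := by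
      have h2 : X.mulVec (v₀ - w') = X.mulVec v₀ - X.mulVec w' := by
        simp [Matrix.mulVec_sub]
      rw [h2, map_sub, hw']
      exact W.sub_starProjection_mem_orthogonal u₀
    have hwW : e (X.mulVec w) ∈ W :=
      ⟨w, hw, by simp [Matrix.mulVecLin_apply]⟩
    have h3 := (Submodule.mem_orthogonal W _).1 hu _ hwW
    rw [real_inner_comm] at h3
    simpa [PiLp.inner_apply, RCLike.inner_apply, dotProduct, he,
      WithLp.linearEquiv_symm_apply, mul_comm] using h3

lemma exists_glsol {n p m : ℕ} (y : Fin n → ℝ) (X : Matrix (Fin n) (Fin p) ℝ)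
    (D : Matrix (Fin m) (Fin p) ℝ) (lam : ℝ) (hlam : 0 < lam) :
    ∃ β, IsGLSol n p m y X D lam β := by
  classical
  set T : (Fin p → ℝ) →ₗ[ℝ] (Fin n → ℝ) × (Fin m → ℝ) :=
    (X.mulVecLin).prod (D.mulVecLin) with hT
  set g : ((Fin n → ℝ) × (Fin m → ℝ)) → ℝ :=
    fun z => (1/2) * ∑ i, (y i - z.1 i)^2 + lam * ∑ i, |z.2 i| with hgdef
  have hg : ∀ β, glCrit n p m y X D lam β = g (T β) := by
    intro β; simp [glCrit, hgdef, hT, Matrix.mulVecLin_apply]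
  have hgc : Continuous g := by
    apply Continuous.add
    · exact continuous_const.mul (continuous_finset_sum _ fun i _ =>
        ((continuous_const.sub ((continuous_apply i).comp continuous_fst)).pow 2))
    · exact continuous_const.mul (continuous_finset_sum _ fun i _ =>
        (((continuous_apply i).comp continuous_snd).abs))
  set G0 : ℝ := g 0 with hG0
  have hG0v : G0 = (1/2) * ∑ i, (y i)^2 := by simp [hG0, hgdef]
  have hG0nn : 0 ≤ G0 := by
    rw [hG0v]; positivity
  set R : ℝ := max 1 (max ((G0+1)/lam) (‖y‖ + Real.sqrt (2*G0+2))) with hR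
  have hR1 : (1:ℝ) ≤ R := le_max_left _ _
  have hRlam : (G0+1)/lam ≤ R := le_trans (le_max_left _ _) (le_max_right _ _)
  have hRy : ‖y‖ + Real.sqrt (2*G0+2) ≤ R := le_trans (le_max_right _ _) (le_max_right _ _)
  clear_value T g G0
  have hgnn : ∀ z, 0 ≤ (1/2) * ∑ i, (y i - (z:((Fin n → ℝ) × (Fin m → ℝ))).1 i)^2 := by
    intro z; positivity
  have habs : ∀ (z : (Fin n → ℝ) × (Fin m → ℝ)), 0 ≤ lam * ∑ i, |z.2 i| := by
    intro z
    apply mul_nonneg hlam.le (Finset.sum_nonneg fun i _ => abs_nonneg _)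
  have hbig : ∀ z : (Fin n → ℝ) × (Fin m → ℝ), ¬ ‖z‖ ≤ R → G0 < g z := by
    intro z hz
    have : ¬ (‖z.1‖ ≤ R ∧ ‖z.2‖ ≤ R) := by
      intro ⟨h1, h2⟩; exact hz (by rw [Prod.norm_def]; exact max_le h1 h2)
    rw [not_and_or] at this
    rcases this with h | h
    · obtain ⟨i, hi⟩ : ∃ i, R < ‖z.1 i‖ := by
        by_contra hc; push_neg at hc
        exact h ((pi_norm_le_iff_of_nonneg (by linarith)).2 hc)
      have hyi : ‖y i‖ ≤ ‖y‖ := norm_le_pi_norm y i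
      have hs : Real.sqrt (2*G0+2) ≤ |z.1 i| - |y i| := by
        have : ‖y‖ + Real.sqrt (2*G0+2) < |z.1 i| := lt_of_le_of_lt hRy hi
        simp only [Real.norm_eq_abs] at this hyi ⊢; linarith
      have hsq : 2*G0+2 ≤ (y i - z.1 i)^2 := by
        have h1 : Real.sqrt (2*G0+2) ≤ |y i - z.1 i| := by
          have := abs_sub_abs_le_abs_sub (z.1 i) (y i)
          rw [abs_sub_comm] at this
          linarith
        have h2 := Real.sq_sqrt (by linarith : (0:ℝ) ≤ 2*G0+2)
        calc 2*G0+2 = Real.sqrt (2*G0+2)^2 := h2.symm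
          _ ≤ |y i - z.1 i|^2 := by
              apply pow_le_pow_left₀ (Real.sqrt_nonneg _) h1
          _ = (y i - z.1 i)^2 := sq_abs _
      have hsum : (y i - z.1 i)^2 ≤ ∑ j, (y j - z.1 j)^2 :=
        Finset.single_le_sum (f := fun j => (y j - z.1 j)^2) (fun j _ => sq_nonneg _) (Finset.mem_univ i)
      have : G0 + 1 ≤ g z := by
        have := habs z
        rw [hgdef]
        show G0 + 1 ≤ 1 / 2 * ∑ i : Fin n, (y i - z.1 i) ^ 2 + lam * ∑ i : Fin m, |z.2 i|
        linarith
      linarith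
    · obtain ⟨i, hi⟩ : ∃ i, R < ‖z.2 i‖ := by
        by_contra hc; push_neg at hc
        exact h ((pi_norm_le_iff_of_nonneg (by linarith)).2 hc)
      have hsum : |z.2 i| ≤ ∑ j, |z.2 j| :=
        Finset.single_le_sum (f := fun j => |z.2 j|) (fun j _ => abs_nonneg _) (Finset.mem_univ i)
      have hRl : G0 + 1 ≤ lam * R := by
        rw [div_le_iff₀ hlam] at hRlam; linarith [hRlam]
      have : G0 + 1 ≤ g z := by
        simp only [Real.norm_eq_abs] at hi
        have h2 : lam * R ≤ lam * ∑ j, |z.2 j| := by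
          apply mul_le_mul_of_nonneg_left (by linarith) hlam.le
        have := hgnn z
        rw [hgdef]
        show G0 + 1 ≤ 1 / 2 * ∑ i : Fin n, (y i - z.1 i) ^ 2 + lam * ∑ i : Fin m, |z.2 i|
        linarith
      linarith
  -- compact set
  set S : Set ((Fin n → ℝ) × (Fin m → ℝ)) :=
    (LinearMap.range T : Submodule ℝ _) ∩ Metric.closedBall 0 R with hS
  have hT0 : T 0 = 0 := map_zero T
  have h0S : (0 : (Fin n → ℝ) × (Fin m → ℝ)) ∈ S :=
    ⟨⟨0, hT0⟩, by simp; linarith⟩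
  have hScompact : IsCompact S := by
    apply IsCompact.inter_left (isCompact_closedBall _ _)
    exact Submodule.closed_of_finiteDimensional _
  obtain ⟨z₀, hz₀S, hz₀min⟩ := hScompact.exists_isMinOn ⟨0, h0S⟩ (hgc.continuousOn)
  obtain ⟨⟨β₀, hβ₀⟩, hz₀ball⟩ := hz₀S
  refine ⟨β₀, fun β' => ?_⟩
  rw [hg, hg, hβ₀]
  by_cases hβ'R : ‖T β'‖ ≤ R
  · exact hz₀min ⟨⟨β', rfl⟩, by simpa [Metric.mem_closedBall] using hβ'R⟩
  · have h1 : g z₀ ≤ G0 := by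
      have := hz₀min h0S
      simpa [hG0] using this
    have h2 := hbig (T β') hβ'R
    linarith

lemma sign_mem_Icc (x : ℝ) : Real.sign x ∈ Set.Icc (-1:ℝ) 1 := by
  rcases Real.sign_apply_eq x with h | h | h <;> rw [h] <;> norm_num

lemma mySign_mul_self (x : ℝ) : Real.sign x * x = |x| := by
  rcases lt_trichotomy x 0 with h | h | h
  · rw [Real.sign_of_neg h, abs_of_neg h]; ring
  · simp [h]
  · rw [Real.sign_of_pos h, abs_of_pos h]; ring

lemma dot_aux {a b : ℕ} (A : Matrix (Fin a) (Fin b) ℝ) (x : Fin a → ℝ) (z : Fin b → ℝ) :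
    A.transpose.mulVec x ⬝ᵥ z = x ⬝ᵥ A.mulVec z := by
  simp only [dotProduct, Matrix.mulVec, Matrix.transpose_apply, dotProduct,
    Finset.sum_mul, Finset.mul_sum]
  rw [Finset.sum_comm]
  apply Finset.sum_congr rfl; intro i _
  apply Finset.sum_congr rfl; intro j _
  ring


lemma exists_optsubgrad {n p m : ℕ} (y : Fin n → ℝ) (X : Matrix (Fin n) (Fin p) ℝ)
    (D : Matrix (Fin m) (Fin p) ℝ) (lam : ℝ) (hlam : 0 < lam)
    (bh : Fin p → ℝ) (hsol : IsGLSol n p m y X D lam bh) :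
    ∃ γ : Fin m → ℝ,
      X.transpose.mulVec (y - X.mulVec bh) = lam • D.transpose.mulVec γ ∧
      ∀ i : Fin m,
        (D.mulVec bh i ≠ 0 → γ i = Real.sign (D.mulVec bh i)) ∧
        (D.mulVec bh i = 0 → γ i ∈ Set.Icc (-1 : ℝ) 1) := by
  classical
  set b : Fin m → ℝ := D.mulVec bh with hb
  set r : Fin n → ℝ := y - X.mulVec bh with hr
  set c : Fin p → ℝ := X.transpose.mulVec r with hc
  clear_value b r c
  set K : Set (Fin m → ℝ) :=
    Set.pi Set.univ (fun i => if b i = 0 then Set.Icc (-1:ℝ) 1 else {Real.sign (b i)}) with hK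
  have hKmem : ∀ γ, γ ∈ K ↔ ∀ i, (b i = 0 → γ i ∈ Set.Icc (-1:ℝ) 1) ∧
      (b i ≠ 0 → γ i = Real.sign (b i)) := by
    intro γ
    constructor
    · intro hγ i
      have hi : γ i ∈ (if b i = 0 then Set.Icc (-1:ℝ) 1 else {Real.sign (b i)}) :=
        hγ i (Set.mem_univ i)
      by_cases h : b i = 0
      · rw [if_pos h] at hi
        exact ⟨fun _ => hi, fun hne => absurd h hne⟩
      · rw [if_neg h] at hi
        exact ⟨fun heq => absurd heq h, fun _ => hi⟩
    · intro hγ i _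
      show γ i ∈ (if b i = 0 then Set.Icc (-1:ℝ) 1 else {Real.sign (b i)})
      by_cases h : b i = 0
      · rw [if_pos h]; exact (hγ i).1 h
      · rw [if_neg h]; exact (hγ i).2 h
  have hKconv : Convex ℝ K := by
    apply convex_pi
    intro i _
    by_cases h : b i = 0
    · rw [if_pos h]; exact convex_Icc _ _
    · rw [if_neg h]; exact convex_singleton _
  have hKclosed : IsClosed K := by
    apply isClosed_set_pi
    intro i _
    by_cases h : b i = 0
    · rw [if_pos h]; exact isClosed_Icc
    · rw [if_neg h]; exact isClosed_singleton
  have hKbdd : Bornology.IsBounded K := by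
    apply Bornology.IsBounded.subset (Metric.isBounded_closedBall (x := (0 : Fin m → ℝ)) (r := 1))
    intro γ hγ
    rw [Metric.mem_closedBall, dist_zero_right]
    apply pi_norm_le_iff_of_nonneg zero_le_one |>.2
    intro i
    rw [Real.norm_eq_abs, abs_le]
    by_cases h : b i = 0
    · exact ((hKmem γ).1 hγ i).1 h
    · rw [((hKmem γ).1 hγ i).2 h]; exact sign_mem_Icc _
  have hKcompact : IsCompact K := Metric.isCompact_of_isClosed_isBounded hKclosed hKbdd
  clear_value K
  clear hK
  set Lmap : (Fin m → ℝ) →ₗ[ℝ] (Fin p → ℝ) := lam • (Matrix.mulVecLin D.transpose) with hLmap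
  have hLapp : ∀ g : Fin m → ℝ, Lmap g = lam • D.transpose.mulVec g := by
    intro g; rw [hLmap]; simp [Matrix.mulVecLin_apply, Matrix.mulVec_transpose]
  set S : Set (Fin p → ℝ) := Lmap '' K with hS
  have hSconv : Convex ℝ S := hKconv.linear_image Lmap
  have hScompact : IsCompact S := hKcompact.image Lmap.continuous_of_finiteDimensional
  have hSmem : ∀ x, x ∈ S ↔ ∃ γ ∈ K, Lmap γ = x := by
    intro x; rw [hS]; constructor
    · rintro ⟨γ, hγ, hx⟩; exact ⟨γ, hγ, hx⟩
    · rintro ⟨γ, hγ, hx⟩; exact ⟨γ, hγ, hx⟩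
  clear_value S Lmap
  clear hS hLmap
  have hcS : c ∈ S := by
    by_contra hcS
    obtain ⟨f, u, hfu, hufc⟩ :=
      geometric_hahn_banach_closed_point hSconv hScompact.isClosed hcS
    obtain ⟨v, hfv⟩ : ∃ v : Fin p → ℝ, ∀ x : Fin p → ℝ, f x = ∑ j, x j * v j := by
      refine ⟨fun j => f (Pi.single j 1), fun x => ?_⟩
      conv_lhs => rw [← Finset.univ_sum_single x]
      rw [map_sum]
      apply Finset.sum_congr rfl
      intro j _
      have h1 : Pi.single j (x j) = x j • (Pi.single j 1 : Fin p → ℝ) := by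
        rw [← Pi.single_smul, smul_eq_mul, mul_one]
      rw [h1, _root_.map_smul, smul_eq_mul]
    set d : Fin m → ℝ := D.mulVec v with hd
    set a : Fin n → ℝ := X.mulVec v with ha
    set γt : Fin m → ℝ := fun i => if b i = 0 then Real.sign (d i) else Real.sign (b i) with hγt
    have hγti : ∀ i, γt i = if b i = 0 then Real.sign (d i) else Real.sign (b i) := fun i => rfl
    clear_value d a γt
    clear hγt
    have hγtK : γt ∈ K := by
      apply (hKmem _).2
      intro i
      constructor
      · intro h; rw [hγti, if_pos h]; exact sign_mem_Icc _
      · intro h; rw [hγti, if_neg h]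
    have hweight : ∀ i, γt i * d i = if b i = 0 then |d i| else Real.sign (b i) * d i := by
      intro i
      by_cases h : b i = 0
      · rw [hγti, if_pos h, if_pos h]; exact mySign_mul_self _
      · rw [hγti, if_neg h, if_neg h]
    have hflam : ∀ γ' : Fin m → ℝ, f (Lmap γ') = lam * ∑ i, γ' i * d i := by
      intro γ'
      rw [hLapp, hfv]
      have h2 : ∑ j, (lam • D.transpose.mulVec γ') j * v j
          = lam * (D.transpose.mulVec γ' ⬝ᵥ v) := by
        simp only [Pi.smul_apply, smul_eq_mul, dotProduct, Finset.mul_sum]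
        apply Finset.sum_congr rfl; intros; ring
      rw [h2, dot_aux, hd]
      rfl
    set M : ℝ := lam * ∑ i, γt i * d i with hM
    have hMlt : M < f c := by
      have h1 : f (Lmap γt) < u := hfu _ ((hSmem _).2 ⟨γt, hγtK, rfl⟩)
      rw [hflam] at h1
      rw [hM]; linarith
    have hfc : f c = r ⬝ᵥ a := by
      rw [hfv, hc, ha]
      exact dot_aux X r v
    set cv : ℝ := r ⬝ᵥ a with hcv
    have hMcv : M < cv := by rw [← hfc]; exact hMlt
    set ε : ℝ := cv - M with hε
    have hεpos : 0 < ε := by rw [hε]; linarith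
    set Q : ℝ := ∑ i, (a i)^2 with hQ
    have hQnn : 0 ≤ Q := by rw [hQ]; exact Finset.sum_nonneg fun i _ => sq_nonneg _
    clear_value M cv ε Q
    set τ : Fin m → ℝ := fun i => if b i = 0 then 1 else |b i| / (|d i| + 1) with hτ
    have hτi : ∀ i, τ i = if b i = 0 then 1 else |b i| / (|d i| + 1) := fun i => rfl
    clear_value τ
    clear hτ
    have hτpos : ∀ i, 0 < τ i := by
      intro i
      rw [hτi]
      by_cases h : b i = 0
      · rw [if_pos h]; norm_num
      · rw [if_neg h]
        apply div_pos (abs_pos.2 h) (by positivity)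
    obtain ⟨t, htpos, htτ, htε⟩ : ∃ t : ℝ, 0 < t ∧ (∀ i, t ≤ τ i) ∧ t * (Q + 1) ≤ ε := by
      set Tf : Finset ℝ := insert (1:ℝ) (Finset.univ.image τ) with hTf
      have hTfne : Tf.Nonempty := ⟨1, Finset.mem_insert_self _ _⟩
      refine ⟨min (Tf.min' hTfne) (ε / (Q + 1)), ?_, ?_, ?_⟩
      · apply lt_min ?_ (div_pos hεpos (by linarith))
        have hmem := Tf.min'_mem hTfne
        rcases Finset.mem_insert.1 hmem with h | h
        · rw [h]; norm_num
        · obtain ⟨i, _, hi⟩ := Finset.mem_image.1 h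
          rw [← hi]; exact hτpos i
      · intro i
        exact le_trans (min_le_left _ _) (Finset.min'_le _ _
          (Finset.mem_insert_of_mem (Finset.mem_image_of_mem τ (Finset.mem_univ i))))
      · rw [← le_div_iff₀ (by linarith : (0:ℝ) < Q + 1)]
        exact min_le_right _ _
    have habsi : ∀ i, |b i + t * d i| = |b i| + t * (γt i * d i) := by
      intro i
      by_cases h : b i = 0
      · rw [h, hweight i, if_pos h]
        simp [abs_mul, abs_of_pos htpos]
      · have hτle : t ≤ |b i| / (|d i| + 1) := by
          have h0 := htτ i; rwa [hτi, if_neg h] at h0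
        have h1 : t * (|d i| + 1) ≤ |b i| := by
          rwa [le_div_iff₀ (by positivity : (0:ℝ) < |d i| + 1)] at hτle
        have hlt : t * |d i| < |b i| := by nlinarith [htpos]
        rw [hweight i, if_neg h]
        rcases lt_trichotomy (b i) 0 with hbi | hbi | hbi
        · have h2 : b i + t * d i < 0 := by
            have h3 : t * d i ≤ t * |d i| :=
              mul_le_mul_of_nonneg_left (le_abs_self _) htpos.le
            have habsb : |b i| = -b i := abs_of_neg hbi
            linarith
          rw [abs_of_neg h2, abs_of_neg hbi, Real.sign_of_neg hbi]; ring
        · exact absurd hbi h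
        · have h2 : 0 < b i + t * d i := by
            have h3 : -(t * |d i|) ≤ t * d i := by
              rw [← mul_neg]
              exact mul_le_mul_of_nonneg_left (neg_abs_le _) htpos.le
            have habsb : |b i| = b i := abs_of_pos hbi
            linarith
          rw [abs_of_pos h2, abs_of_pos hbi, Real.sign_of_pos hbi]; ring
    have hXmv : X.mulVec (bh + t • v) = X.mulVec bh + t • a := by
      rw [Matrix.mulVec_add, Matrix.mulVec_smul, ha]
    have hDmv : D.mulVec (bh + t • v) = b + t • d := by
      rw [Matrix.mulVec_add, Matrix.mulVec_smul, hd, hb]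
    have hcrit : glCrit n p m y X D lam (bh + t • v)
        = glCrit n p m y X D lam bh - t * cv + t^2/2 * Q + t * M := by
      rw [glCrit, glCrit, hXmv, hDmv]
      have h1 : ∑ i, (y i - (X.mulVec bh + t • a) i)^2
          = ∑ i, (y i - X.mulVec bh i)^2 - 2 * t * cv + t^2 * Q := by
        rw [hQ, hcv, dotProduct, Finset.mul_sum, Finset.mul_sum, ← Finset.sum_sub_distrib,
          ← Finset.sum_add_distrib]
        apply Finset.sum_congr rfl
        intro i _
        have hri : r i = y i - X.mulVec bh i := by rw [hr]; rfl
        simp only [Pi.add_apply, Pi.smul_apply, smul_eq_mul, hri]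
        ring
      have h2 : ∑ i, |(b + t • d) i| = ∑ i, |b i| + t * ∑ i, γt i * d i := by
        rw [Finset.mul_sum, ← Finset.sum_add_distrib]
        apply Finset.sum_congr rfl
        intro i _
        simp only [Pi.add_apply, Pi.smul_apply, smul_eq_mul]
        exact habsi i
      rw [h1, h2, hM, ← hb]
      ring
    have hlt : glCrit n p m y X D lam (bh + t • v) < glCrit n p m y X D lam bh := by
      rw [hcrit]
      have h1 : t * Q ≤ ε - t := by nlinarith
      have h2 : ε = cv - M := hε
      nlinarith [htpos, hεpos]
    exact absurd (hsol (bh + t • v)) (not_le.2 hlt)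
  obtain ⟨γ, hγK, hγeq⟩ := (hSmem c).1 hcS
  refine ⟨γ, ?_, ?_⟩
  · rw [← hγeq, hLapp]
  · intro i
    have h := (hKmem γ).1 hγK i
    exact ⟨h.2, h.1⟩

lemma sol_fit_eq {n p m : ℕ} {y : Fin n → ℝ} {X : Matrix (Fin n) (Fin p) ℝ}
    {D : Matrix (Fin m) (Fin p) ℝ} {lam : ℝ} (hlam : 0 < lam) {β₁ β₂ : Fin p → ℝ}
    (h₁ : IsGLSol n p m y X D lam β₁) (h₂ : IsGLSol n p m y X D lam β₂) :
    X.mulVec β₁ = X.mulVec β₂ ∧ ∑ i, |D.mulVec β₁ i| = ∑ i, |D.mulVec β₂ i| := by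
  have hcrit : glCrit n p m y X D lam β₁ = glCrit n p m y X D lam β₂ :=
    le_antisymm (h₁ β₂) (h₂ β₁)
  have hfit : X.mulVec β₁ = X.mulVec β₂ := by
    set mid : Fin p → ℝ := (1/2 : ℝ) • (β₁ + β₂) with hmid
    have hXmid : X.mulVec mid = (1/2 : ℝ) • (X.mulVec β₁ + X.mulVec β₂) := by
      rw [hmid, Matrix.mulVec_smul, Matrix.mulVec_add]
    have hDmid : D.mulVec mid = (1/2 : ℝ) • (D.mulVec β₁ + D.mulVec β₂) := by
      rw [hmid, Matrix.mulVec_smul, Matrix.mulVec_add]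
    set Sq : ℝ := ∑ i, (X.mulVec β₁ i - X.mulVec β₂ i)^2 with hSq
    have hquad : ∑ i, (y i - X.mulVec mid i)^2
        = (1/2) * ∑ i, (y i - X.mulVec β₁ i)^2 + (1/2) * ∑ i, (y i - X.mulVec β₂ i)^2
          - (1/4) * Sq := by
      rw [hSq, Finset.mul_sum, Finset.mul_sum, Finset.mul_sum, ← Finset.sum_add_distrib,
        ← Finset.sum_sub_distrib]
      apply Finset.sum_congr rfl
      intro i _
      rw [hXmid]
      simp only [Pi.smul_apply, Pi.add_apply, smul_eq_mul]
      ring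
    have habs : ∑ i, |D.mulVec mid i|
        ≤ (1/2) * ∑ i, |D.mulVec β₁ i| + (1/2) * ∑ i, |D.mulVec β₂ i| := by
      rw [Finset.mul_sum, Finset.mul_sum, ← Finset.sum_add_distrib]
      apply Finset.sum_le_sum
      intro i _
      rw [hDmid]
      simp only [Pi.smul_apply, Pi.add_apply, smul_eq_mul]
      calc |1/2 * (D.mulVec β₁ i + D.mulVec β₂ i)|
          ≤ 1/2 * |D.mulVec β₁ i| + 1/2 * |D.mulVec β₂ i| := by
            rw [abs_mul]
            rw [abs_of_pos (by norm_num : (0:ℝ) < 1/2)]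
            have := abs_add_le (D.mulVec β₁ i) (D.mulVec β₂ i)
            linarith
        _ = 1/2 * |D.mulVec β₁ i| + 1/2 * |D.mulVec β₂ i| := rfl
    have hSqnn : 0 ≤ Sq := by rw [hSq]; exact Finset.sum_nonneg fun i _ => sq_nonneg _
    have hmidge : glCrit n p m y X D lam β₁ ≤ glCrit n p m y X D lam mid := h₁ mid
    have hmidle : glCrit n p m y X D lam mid
        ≤ glCrit n p m y X D lam β₁ - (1/8) * Sq := by
      rw [glCrit, glCrit]
      have h3 : lam * ∑ i, |D.mulVec mid i|
          ≤ lam * ((1/2) * ∑ i, |D.mulVec β₁ i| + (1/2) * ∑ i, |D.mulVec β₂ i|) :=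
        mul_le_mul_of_nonneg_left habs hlam.le
      have h4 : glCrit n p m y X D lam β₂ = glCrit n p m y X D lam β₁ := hcrit.symm
      rw [glCrit, glCrit] at h4
      rw [hquad]
      linarith
    have hSq0 : Sq = 0 := by linarith
    have : ∀ i, (X.mulVec β₁ i - X.mulVec β₂ i)^2 = 0 := by
      intro i
      have h5 : ∀ j ∈ Finset.univ, 0 ≤ (X.mulVec β₁ j - X.mulVec β₂ j)^2 :=
        fun j _ => sq_nonneg _
      have := (Finset.sum_eq_zero_iff_of_nonneg h5).1 hSq0.symm.symm
      · exact this i (Finset.mem_univ i)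
    funext i
    have := this i
    nlinarith [this]
  refine ⟨hfit, ?_⟩
  have h6 : glCrit n p m y X D lam β₁ = glCrit n p m y X D lam β₂ := hcrit
  rw [glCrit, glCrit, hfit] at h6
  have h7 : lam * ∑ i, |D.mulVec β₁ i| = lam * ∑ i, |D.mulVec β₂ i| := by linarith
  exact mul_left_cancel₀ hlam.ne' h7

lemma subgrad_abs_le {p m : ℕ}
    {D : Matrix (Fin m) (Fin p) ℝ} {γ : Fin m → ℝ} {βh : Fin p → ℝ}
    (hsg : ∀ i : Fin m,
      (D.mulVec βh i ≠ 0 → γ i = Real.sign (D.mulVec βh i)) ∧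
      (D.mulVec βh i = 0 → γ i ∈ Set.Icc (-1 : ℝ) 1)) :
    ∀ i, |γ i| ≤ 1 := by
  intro i
  by_cases h : D.mulVec βh i = 0
  · have := (hsg i).2 h
    rw [abs_le]; exact this
  · rw [(hsg i).1 h]
    rcases Real.sign_apply_eq (D.mulVec βh i) with hs | hs | hs <;> rw [hs] <;> norm_num

lemma sol_in_null {n p m : ℕ} {y : Fin n → ℝ} {X : Matrix (Fin n) (Fin p) ℝ}
    {D : Matrix (Fin m) (Fin p) ℝ} {lam : ℝ} (hlam : 0 < lam) {γ : Fin m → ℝ}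
    (hγ : IsOptSubgrad n p m y X D lam γ) {β : Fin p → ℝ}
    (hβ : IsGLSol n p m y X D lam β) :
    β ∈ nullDminus m p D (boundarySet m γ) := by
  obtain ⟨βh, hβh, hkkt, hsg⟩ := hγ
  have hfit := (sol_fit_eq hlam hβ hβh).1
  have habs := (sol_fit_eq hlam hβ hβh).2
  have hdot : ∀ β' : Fin p → ℝ, (y - X.mulVec βh) ⬝ᵥ X.mulVec β' = lam * (γ ⬝ᵥ D.mulVec β') := by
    intro β'
    rw [← dot_aux X, hkkt, smul_dotProduct, dot_aux, smul_eq_mul]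
  have hcancel : γ ⬝ᵥ D.mulVec β = γ ⬝ᵥ D.mulVec βh := by
    have h1 := hdot β
    have h2 := hdot βh
    rw [hfit] at h1
    rw [h1] at h2
    exact mul_left_cancel₀ hlam.ne' h2
  have hβhabs : γ ⬝ᵥ D.mulVec βh = ∑ i, |D.mulVec βh i| := by
    apply Finset.sum_congr rfl
    intro i _
    by_cases h : D.mulVec βh i = 0
    · rw [h]; simp
    · rw [(hsg i).1 h, mySign_mul_self]
  have hsum : ∑ i, γ i * D.mulVec β i = ∑ i, |D.mulVec β i| := by
    have : γ ⬝ᵥ D.mulVec β = ∑ i, |D.mulVec β i| := by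
      rw [hcancel, hβhabs, habs]
    exact this
  have hle : ∀ i, γ i * D.mulVec β i ≤ |D.mulVec β i| := by
    intro i
    calc γ i * D.mulVec β i ≤ |γ i * D.mulVec β i| := le_abs_self _
      _ = |γ i| * |D.mulVec β i| := abs_mul _ _
      _ ≤ 1 * |D.mulVec β i| :=
          mul_le_mul_of_nonneg_right (subgrad_abs_le hsg i) (abs_nonneg _)
      _ = |D.mulVec β i| := one_mul _
  have heq : ∀ i, γ i * D.mulVec β i = |D.mulVec β i| := by
    by_contra hne
    push_neg at hne
    obtain ⟨i, hi⟩ := hne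
    have hstrict : γ i * D.mulVec β i < |D.mulVec β i| := lt_of_le_of_ne (hle i) hi
    have := Finset.sum_lt_sum (fun j (_ : j ∈ Finset.univ) => hle j)
      ⟨i, Finset.mem_univ i, hstrict⟩
    rw [hsum] at this
    exact lt_irrefl _ this
  intro i hiB
  by_contra hne
  have habspos : 0 < |D.mulVec β i| := abs_pos.2 hne
  have hγlt : |γ i| < 1 := by
    rcases lt_or_eq_of_le (subgrad_abs_le hsg i) with h | h
    · exact h
    · exact absurd h hiB
  have : γ i * D.mulVec β i < |D.mulVec β i| := by
    calc γ i * D.mulVec β i ≤ |γ i| * |D.mulVec β i| := by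
          rw [← abs_mul]; exact le_abs_self _
      _ < 1 * |D.mulVec β i| := mul_lt_mul_of_pos_right hγlt habspos
      _ = |D.mulVec β i| := one_mul _
  rw [heq i] at this
  exact lt_irrefl _ this

lemma glsol_exists_unique {n p m : ℕ} {y : Fin n → ℝ} {X : Matrix (Fin n) (Fin p) ℝ}
    {D : Matrix (Fin m) (Fin p) ℝ} {lam : ℝ} (hlam : 0 < lam)
    (hH : ∀ γ : Fin m → ℝ, IsOptSubgrad n p m y X D lam γ →
      ∀ β : Fin p → ℝ, X.mulVec β = 0 → β ∈ nullDminus m p D (boundarySet m γ) → β = 0) :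
    ∃! β : Fin p → ℝ, IsGLSol n p m y X D lam β := by
  obtain ⟨β₀, hβ₀⟩ := exists_glsol y X D lam hlam
  obtain ⟨γ, hkkt, hsg⟩ := exists_optsubgrad y X D lam hlam β₀ hβ₀
  have hγ : IsOptSubgrad n p m y X D lam γ := ⟨β₀, hβ₀, hkkt, hsg⟩
  refine ⟨β₀, hβ₀, ?_⟩
  intro β' hβ'
  have h1 := sol_in_null hlam hγ hβ'
  have h2 := sol_in_null hlam hγ hβ₀
  have hX : X.mulVec (β' - β₀) = 0 := by
    rw [Matrix.mulVec_sub, (sol_fit_eq hlam hβ' hβ₀).1]; simp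
  have hmem : (β' - β₀) ∈ nullDminus m p D (boundarySet m γ) := by
    intro i hi
    rw [Matrix.mulVec_sub, Pi.sub_apply, h1 i hi, h2 i hi, sub_zero]
  have := hH γ hγ (β' - β₀) hX hmem
  exact sub_eq_zero.mp this

lemma abs_sign_one {x : ℝ} (hx : x ≠ 0) : |Real.sign x| = 1 := by
  rcases Real.sign_apply_eq_of_ne_zero x hx with h | h <;> rw [h] <;> norm_num

lemma midpoint_subgrad {n p m : ℕ} {y : Fin n → ℝ} {X : Matrix (Fin n) (Fin p) ℝ}
    {D : Matrix (Fin m) (Fin p) ℝ} {lam : ℝ} (hlam : 0 < lam)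
    (hu : ∀ b1 b2 : Fin p → ℝ, IsGLSol n p m y X D lam b1 → IsGLSol n p m y X D lam b2 → b1 = b2)
    {γ₁ γ₂ : Fin m → ℝ}
    (hγ₁ : IsOptSubgrad n p m y X D lam γ₁) (hγ₂ : IsOptSubgrad n p m y X D lam γ₂) :
    IsOptSubgrad n p m y X D lam ((1/2 : ℝ) • (γ₁ + γ₂)) ∧
    (∀ i, i ∈ boundarySet m ((1/2 : ℝ) • (γ₁ + γ₂)) →
      i ∈ boundarySet m γ₁ ∧ i ∈ boundarySet m γ₂) := by
  obtain ⟨β₁, hβ₁, hkkt₁, hsg₁⟩ := hγ₁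
  obtain ⟨β₂, hβ₂, hkkt₂, hsg₂⟩ := hγ₂
  have hβeq : β₂ = β₁ := hu β₂ β₁ hβ₂ hβ₁
  subst hβeq
  constructor
  · refine ⟨β₂, hβ₂, ?_, ?_⟩
    · have h1 : D.transpose.mulVec ((1/2 : ℝ) • (γ₁ + γ₂))
          = (1/2 : ℝ) • (D.transpose.mulVec γ₁ + D.transpose.mulVec γ₂) := by
        rw [Matrix.mulVec_smul, Matrix.mulVec_add]
      rw [h1, smul_comm, smul_add, ← hkkt₁, ← hkkt₂]
      module
    · intro i
      constructor
      · intro h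
        show (1/2 : ℝ) * (γ₁ i + γ₂ i) = Real.sign ((D.mulVec β₂) i)
        rw [(hsg₁ i).1 h, (hsg₂ i).1 h]; ring
      · intro h
        have ha := Set.mem_Icc.1 ((hsg₁ i).2 h)
        have hb := Set.mem_Icc.1 ((hsg₂ i).2 h)
        have : ((1/2 : ℝ) • (γ₁ + γ₂)) i = (1/2 : ℝ) * (γ₁ i + γ₂ i) := rfl
        rw [this, Set.mem_Icc]
        constructor <;> linarith
  · intro i hi
    have h₁ := subgrad_abs_le hsg₁ i
    have h₂ := subgrad_abs_le hsg₂ i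
    have hi' : |(1/2 : ℝ) * (γ₁ i + γ₂ i)| = 1 := hi
    rw [abs_mul, abs_of_pos (by norm_num : (0:ℝ) < 1/2)] at hi'
    have hsum : |γ₁ i + γ₂ i| = 2 := by linarith
    have h1le := abs_le.1 h₁
    have h2le := abs_le.1 h₂
    rcases abs_eq (by norm_num : (0:ℝ) ≤ 2) |>.1 hsum with h | h
    · constructor
      · show |γ₁ i| = 1; rw [abs_of_pos (by linarith), ]; linarith
      · show |γ₂ i| = 1; rw [abs_of_pos (by linarith)]; linarith
    · constructor
      · show |γ₁ i| = 1; rw [abs_of_neg (by linarith)]; linarith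
      · show |γ₂ i| = 1; rw [abs_of_neg (by linarith)]; linarith

def LB {m p : ℕ} (D : Matrix (Fin m) (Fin p) ℝ) (B : Set (Fin m)) :
    Submodule ℝ (Fin p → ℝ) where
  carrier := nullDminus m p D B
  add_mem' := fun {a b} ha hb i hi => by
    rw [Matrix.mulVec_add, Pi.add_apply, ha i hi, hb i hi, add_zero]
  zero_mem' := fun i _ => by rw [Matrix.mulVec_zero]; rfl
  smul_mem' := fun c x hx i hi => by
    rw [Matrix.mulVec_smul, Pi.smul_apply, hx i hi, smul_zero]

lemma LB_mem {m p : ℕ} (D : Matrix (Fin m) (Fin p) ℝ) (B : Set (Fin m)) (β : Fin p → ℝ) :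
    β ∈ LB D B ↔ β ∈ nullDminus m p D B := Iff.rfl

lemma LB_mono {m p : ℕ} (D : Matrix (Fin m) (Fin p) ℝ) {B B' : Set (Fin m)} (h : B' ⊆ B) :
    LB D B' ≤ LB D B := fun β hβ i hi => hβ i (fun hc => hi (h hc))

open MeasureTheory in
theorem generalized_lasso_rank_condition_implies_invariance_and_uniqueness_ae
    (n p m : ℕ) (X : Matrix (Fin n) (Fin p) ℝ)
    (D : Matrix (Fin m) (Fin p) ℝ) (lam : ℝ) (hlam : 0 < lam) :
    ∃ N : Set (Fin n → ℝ), volume N = 0 ∧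
      ∀ y : Fin n → ℝ, y ∉ N →
        (∀ γ : Fin m → ℝ, IsOptSubgrad n p m y X D lam γ →
          ∀ β : Fin p → ℝ, X.mulVec β = 0 →
            β ∈ nullDminus m p D (boundarySet m γ) → β = 0) →
        ((∀ γ₁ γ₂ : Fin m → ℝ, IsOptSubgrad n p m y X D lam γ₁ →
            IsOptSubgrad n p m y X D lam γ₂ →
            nullDminus m p D (boundarySet m γ₁) = nullDminus m p D (boundarySet m γ₂)) ∧
          ∃! β : Fin p → ℝ, IsGLSol n p m y X D lam β) := by
  classical
  set cond : Finset (Fin m) → Finset (Fin m) → Prop := fun Bf Bf' =>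
    Bf' ⊆ Bf ∧ (∀ w ∈ LB D (↑Bf : Set (Fin m)), X.mulVec w = 0 → w = 0) ∧
      ¬ (LB D (↑Bf : Set (Fin m)) ≤ LB D (↑Bf' : Set (Fin m))) with hcond
  have hvex : ∀ Bf Bf' : Finset (Fin m), ∃ v : Fin p → ℝ,
      cond Bf Bf' → (v ∈ LB D (↑Bf : Set (Fin m)) ∧ X.mulVec v ≠ 0 ∧
        ∀ w ∈ LB D (↑Bf' : Set (Fin m)), X.mulVec v ⬝ᵥ X.mulVec w = 0) := by
    intro Bf Bf'
    by_cases h : cond Bf Bf'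
    · obtain ⟨hsub, hinj, hne⟩ := h
      obtain ⟨v, h1, h2, h3⟩ := exists_sep_vec X (LB D ↑Bf) (LB D ↑Bf')
        (LB_mono D (Finset.coe_subset.2 hsub)) hinj hne
      exact ⟨v, fun _ => ⟨h1, h2, h3⟩⟩
    · exact ⟨0, fun hc => absurd hc h⟩
  choose v hv using hvex
  have hsval : ∃ sval : Bool → ℝ, sval true = 1 ∧ sval false = -1 :=
    ⟨fun s => if s then 1 else -1, rfl, rfl⟩
  obtain ⟨sval, hsvt, hsvf⟩ := hsval
  set κ : Finset (Fin m) → Finset (Fin m) → (Fin m → Bool) → ℝ := fun Bf Bf' sb =>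
    ∑ i ∈ Bf, sval (sb i) * D.mulVec (v Bf Bf') i with hκ
  refine ⟨⋃ Bf : Finset (Fin m), ⋃ Bf' : Finset (Fin m), ⋃ sb : Fin m → Bool,
    {y : Fin n → ℝ | cond Bf Bf' ∧ X.mulVec (v Bf Bf') ⬝ᵥ y = lam * κ Bf Bf' sb}, ?_, ?_⟩
  · refine measure_iUnion_null fun Bf => measure_iUnion_null fun Bf' =>
      measure_iUnion_null fun sb => ?_
    by_cases h : cond Bf Bf'
    · apply measure_mono_null
        (t := {y : Fin n → ℝ | X.mulVec (v Bf Bf') ⬝ᵥ y = lam * κ Bf Bf' sb})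
      · intro y hy; exact hy.2
      · exact hyperplane_vol_zero _ ((hv Bf Bf' h).2.1) _
    · apply measure_mono_null (t := (∅ : Set (Fin n → ℝ)))
      · intro y hy; exact absurd hy.1 h
      · exact measure_empty
  · intro y hyN hH
    have huniq : ∃! β : Fin p → ℝ, IsGLSol n p m y X D lam β := glsol_exists_unique hlam hH
    obtain ⟨βu, hβu, hβuu⟩ := huniq
    have hu2 : ∀ b1 b2 : Fin p → ℝ, IsGLSol n p m y X D lam b1 →
        IsGLSol n p m y X D lam b2 → b1 = b2 :=
      fun b1 b2 h1 h2 => (hβuu b1 h1).trans (hβuu b2 h2).symm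
    have key : ∀ γ γ' : Fin m → ℝ, IsOptSubgrad n p m y X D lam γ →
        IsOptSubgrad n p m y X D lam γ' →
        boundarySet m γ' ⊆ boundarySet m γ →
        nullDminus m p D (boundarySet m γ) = nullDminus m p D (boundarySet m γ') := by
      intro γ γ' hγ hγ' hsub
      have hsub1 : nullDminus m p D (boundarySet m γ') ⊆ nullDminus m p D (boundarySet m γ) :=
        fun β hβ i hi => hβ i (fun hc => hi (hsub hc))
      apply Set.Subset.antisymm ?_ hsub1
      by_contra hnotsub
      set Bf : Finset (Fin m) := Finset.univ.filter (fun i => i ∈ boundarySet m γ) with hBf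
      set Bf' : Finset (Fin m) := Finset.univ.filter (fun i => i ∈ boundarySet m γ') with hBf'
      have hBfc : (↑Bf : Set (Fin m)) = boundarySet m γ := by
        ext i; simp [hBf]
      have hBfc' : (↑Bf' : Set (Fin m)) = boundarySet m γ' := by
        ext i; simp [hBf']
      have hcondh : cond Bf Bf' := by
        refine ⟨?_, ?_, ?_⟩
        · intro i hi
          rw [hBf', Finset.mem_filter] at hi
          rw [hBf, Finset.mem_filter]
          exact ⟨Finset.mem_univ i, hsub hi.2⟩
        · intro w hw hXw
          apply hH γ hγ w hXw
          rw [← hBfc]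
          exact hw
        · intro hle
          apply hnotsub
          intro β hβ
          have : β ∈ LB D (↑Bf : Set (Fin m)) := by rw [LB_mem, hBfc]; exact hβ
          have := hle this
          rw [LB_mem, hBfc'] at this
          exact this
      obtain ⟨hvL, hvX, hvorth⟩ := hv Bf Bf' hcondh
      -- the solutions of both subgradients are βu
      obtain ⟨βa, hβa, hkkta, hsga⟩ := hγ
      obtain ⟨βb, hβb, hkktb, hsgb⟩ := hγ'
      have ha : βa = βu := hu2 _ _ hβa hβu
      have hb : βb = βu := hu2 _ _ hβb hβu
      rw [ha] at hkkta hsga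
      rw [hb] at hkktb hsgb
      -- support of D βu is inside boundarySet γ'
      have hsupp : βu ∈ LB D (↑Bf' : Set (Fin m)) := by
        rw [LB_mem, hBfc']
        intro i hi
        by_contra hne
        apply hi
        show |γ' i| = 1
        rw [(hsgb i).1 hne]
        exact abs_sign_one hne
      set sb : Fin m → Bool := fun i => if γ i = 1 then true else false with hsb
      have hsbv : ∀ i ∈ Bf, sval (sb i) = γ i := by
        intro i hi
        rw [hBf, Finset.mem_filter] at hi
        have habs : |γ i| = 1 := hi.2
        rcases abs_eq (by norm_num : (0:ℝ) ≤ 1) |>.1 habs with h | h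
        · have hsi : sb i = true := by rw [hsb]; simp [h]
          rw [hsi, hsvt, h]
        · have hne : ¬ γ i = 1 := by rw [h]; norm_num
          have hsi : sb i = false := by rw [hsb]; simp [hne]
          rw [hsi, hsvf, h]
      have hdvanish : ∀ i ∉ Bf, D.mulVec (v Bf Bf') i = 0 := by
        intro i hi
        have hvL' := (LB_mem D _ _).1 hvL
        exact hvL' i (fun hc => hi (Finset.mem_coe.1 hc))
      have e1 : X.transpose.mulVec (y - X.mulVec βu) ⬝ᵥ v Bf Bf' = lam * κ Bf Bf' sb := by
        rw [hkkta, smul_dotProduct, smul_eq_mul, dot_aux]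
        congr 1
        rw [hκ, dotProduct]
        rw [← Finset.sum_subset (Finset.subset_univ Bf)
          (fun i _ hi => by rw [hdvanish i hi, mul_zero])]
        exact Finset.sum_congr rfl fun i hi => by rw [hsbv i hi]
      have e2 : X.transpose.mulVec (y - X.mulVec βu) ⬝ᵥ v Bf Bf'
          = y ⬝ᵥ X.mulVec (v Bf Bf') - X.mulVec βu ⬝ᵥ X.mulVec (v Bf Bf') := by
        rw [dot_aux, sub_dotProduct]
      have e3 : X.mulVec βu ⬝ᵥ X.mulVec (v Bf Bf') = 0 := by
        rw [dotProduct_comm]; exact hvorth βu hsupp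
      have hyhyp : X.mulVec (v Bf Bf') ⬝ᵥ y = lam * κ Bf Bf' sb := by
        rw [dotProduct_comm]
        rw [e2, e3, sub_zero] at e1
        exact e1
      exact hyN (Set.mem_iUnion.2 ⟨Bf, Set.mem_iUnion.2 ⟨Bf',
        Set.mem_iUnion.2 ⟨sb, ⟨hcondh, hyhyp⟩⟩⟩⟩)
    refine ⟨?_, ⟨βu, hβu, hβuu⟩⟩
    intro γ₁ γ₂ h1 h2
    obtain ⟨hmidopt, hmidbnd⟩ := midpoint_subgrad hlam hu2 h1 h2
    have e1 := key γ₁ _ h1 hmidopt (fun i hi => (hmidbnd i hi).1)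
    have e2 := key γ₂ _ h2 hmidopt (fun i hi => (hmidbnd i hi).2)
    rw [e1, e2]
end
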